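/- Let G be a graph, C a longest cycle of G with a fixed orientation, H a component of G − V(C), and w, z two distinct vertices of C each having a neighbor in H. Let w₁ be a neighbor of w⁺ on C. If w, w₁, z appear in this order along the orientation of C, then z⁺ is not adjacent to w₁⁻. -/

import Mathlib

open SimpleGraph

/-- The disjoint union of an edge (on vertices 0,1) and `k` isolated vertices. -/
def K2uK (k : ℕ) : SimpleGraph (Fin (k + 2)) :=
  SimpleGraph.fromRel (fun a b => a = 0 ∧ b = 1)

/-- `G` contains no induced copy of `H`. -/
def HFree {α β : Type*} (H : SimpleGraph α) (G : SimpleGraph β) : Prop :=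
  IsEmpty (H ↪g G)

/-- The number of connected components of a graph. -/
noncomputable def numComp {V : Type*} (G : SimpleGraph V) : ℕ :=
  Nat.card G.ConnectedComponent

/-- `S` is a cut set of `G`: removing `S` leaves at least two components. -/
def IsCutSet {V : Type*} (G : SimpleGraph V) (S : Set V) : Prop :=
  2 ≤ numComp (G.induce (Sᶜ : Set V))

/-- `f : ZMod n → V` describes an oriented cycle of length `n` in `G`. -/
structure IsOrientedCycle {V : Type*} (G : SimpleGraph V) (n : ℕ) (f : ZMod n → V) :
    Prop where
  three_le : 3 ≤ n
  inj : Function.Injective f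
  adj : ∀ i, G.Adj (f i) (f (i + 1))

/-- `f` is a longest cycle of `G`. -/
def IsLongestCycle {V : Type*} (G : SimpleGraph V) (n : ℕ) (f : ZMod n → V) : Prop :=
  IsOrientedCycle G n f ∧ ∀ (m : ℕ) (g : ZMod m → V), IsOrientedCycle G m g → m ≤ n

/-- From a nodup cyclically-adjacent list of length ≥ 3, build an oriented cycle. -/
lemma cycleOfList {V : Type*} (G : SimpleGraph V) (l : List V) (h3 : 3 ≤ l.length)
    (hN : l.Nodup) (hchain : l.Chain' G.Adj) (hnil : l ≠ [])
    (hlast : G.Adj (l.getLast hnil) (l.head hnil)) :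
    ∃ g : ZMod l.length → V, IsOrientedCycle G l.length g := by
  haveI : NeZero l.length := ⟨by omega⟩
  haveI : Fact (1 < l.length) := ⟨by omega⟩
  refine ⟨fun x => l.get ⟨x.val, ZMod.val_lt x⟩, h3, ?_, ?_⟩
  · intro x y hxy
    have h1 : (⟨x.val, ZMod.val_lt x⟩ : Fin l.length) = ⟨y.val, ZMod.val_lt y⟩ :=
      List.nodup_iff_injective_get.mp hN hxy
    have h2 : x.val = y.val := by simpa using h1
    calc x = ((x.val : ℕ) : ZMod l.length) := by
            simp [ZMod.natCast_val, ZMod.cast_id]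
      _ = ((y.val : ℕ) : ZMod l.length) := by rw [h2]
      _ = y := by simp [ZMod.natCast_val, ZMod.cast_id]
  · intro x
    by_cases hx : x.val + 1 < l.length
    · have hv : (x + 1).val = x.val + 1 := by
        rw [ZMod.val_add_of_lt]
        · rw [ZMod.val_one]
        · rw [ZMod.val_one]; exact hx
      have := List.isChain_iff_getElem.mp hchain x.val (by omega)
      simpa [hv] using this
    · have hxv : x.val = l.length - 1 := by have := ZMod.val_lt x; omega
      have hx1 : x + 1 = 0 := by
        have hxx : x = ((l.length - 1 : ℕ) : ZMod l.length) := by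
          rw [← hxv]; simp [ZMod.natCast_val, ZMod.cast_id]
        rw [hxx]
        have h4 : ((l.length - 1 : ℕ) : ZMod l.length) + 1
            = ((l.length - 1 + 1 : ℕ) : ZMod l.length) := by push_cast; ring
        rw [h4]
        have h5 : l.length - 1 + 1 = l.length := by omega
        rw [h5]; simp
      rw [hx1]
      have hgx : l.get ⟨x.val, ZMod.val_lt x⟩ = l.getLast hnil := by
        rw [List.getLast_eq_getElem]
        simp [hxv]
      have hg0 : l.get ⟨(0 : ZMod l.length).val, ZMod.val_lt 0⟩ = l.head hnil := by
        rw [List.head_eq_getElem]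
        simp
      rw [hgx, hg0]
      exact hlast

/-- Chain along a mapped `range'`. -/
lemma chain'_range'_map {V : Type*} {R : V → V → Prop} (c : ℕ → V) (s len : ℕ)
    (h : ∀ t, s ≤ t → t + 1 < s + len → R (c t) (c (t + 1))) :
    List.Chain' R ((List.range' s len).map c) := by
  rw [List.Chain', List.isChain_map, List.isChain_iff_getElem]
  intro q hq
  simp only [List.length_range'] at hq
  simp only [List.get_eq_getElem, List.getElem_range', one_mul]
  have h1 : s + (q + 1) = (s + q) + 1 := by omega
  rw [h1]
  exact h (s + q) (by omega) (by omega)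

theorem stmt_17 {V : Type*} (G : SimpleGraph V) (n : ℕ) (f : ZMod n → V)
    (hC : IsLongestCycle G n f)
    (H : (G.induce ((Set.range f)ᶜ : Set V)).ConnectedComponent) (i j k : ZMod n)
    (hne : f i ≠ f j)
    (hw : ∃ h ∈ H.supp, G.Adj (f i) ↑h) (hz : ∃ h ∈ H.supp, G.Adj (f j) ↑h)
    (hw1 : G.Adj (f (i + 1)) (f k))
    (horder : ∃ a b : ℕ, 0 < a ∧ a < b ∧ b < n ∧
      k = i + (a : ZMod n) ∧ j = i + (b : ZMod n)) :
    ¬ G.Adj (f (j + 1)) (f (k - 1)) := by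
  classical
  intro hadj
  obtain ⟨a, b, ha, hab, hbn, hk, hj⟩ := horder
  obtain ⟨⟨hcyc3, hinj, hadjC⟩, hmax⟩ := hC
  -- a ≥ 2, otherwise hw1 is a loop
  have ha2 : 2 ≤ a := by
    by_contra h
    have ha1 : a = 1 := by omega
    subst ha1
    rw [hk] at hw1
    simp at hw1
  -- Get a path inside the component H from a neighbor of f i to a neighbor of f j
  set S : Set V := (Set.range f)ᶜ with hS
  obtain ⟨hwv, hwH, hwadj⟩ := hw
  obtain ⟨hzv, hzH, hzadj⟩ := hz
  rw [ConnectedComponent.mem_supp_iff] at hwH hzH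
  have hreach : (G.induce S).Reachable hwv hzv :=
    ConnectedComponent.exact (hwH.trans hzH.symm)
  obtain ⟨W0⟩ := hreach
  set P := W0.toPath with hP
  set pw : G.Walk (hwv : V) (hzv : V) := P.1.map (Embedding.induce S).toHom with hpw
  set p : List V := pw.support with hp
  have hpne : p ≠ [] := pw.support_ne_nil
  have hpnodup : p.Nodup :=
    (SimpleGraph.Walk.map_isPath_of_injective
      (fun x y hxy => Subtype.ext hxy) P.2).support_nodup
  have hpS : ∀ x ∈ p, x ∈ S := by
    intro x hx
    rw [hp, hpw] at hx
    replace hx : x ∈ (P.1.support.map (Embedding.induce (G := G) S).toHom) := by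
      rw [← SimpleGraph.Walk.support_map]; exact hx
    obtain ⟨y, _, rfl⟩ := List.mem_map.mp hx
    exact y.2
  have hphead : p.head hpne = (hwv : V) := by
    have h0 : p.head? = some (hwv : V) := by
      rw [hp, SimpleGraph.Walk.support_eq_cons pw]; rfl
    rw [List.head?_eq_head hpne] at h0
    exact Option.some.inj h0
  have hplast : p.getLast hpne = (hzv : V) := pw.getLast_support
  -- The cycle vertex function indexed by naturals
  set c : ℕ → V := fun t => f (i + (t : ZMod n)) with hc
  have hcinj : ∀ s t : ℕ, 1 ≤ s → s ≤ n → 1 ≤ t → t ≤ n → c s = c t → s = t := by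
    intro s t hs1 hsn ht1 htn hst
    have h1 : i + (s : ZMod n) = i + (t : ZMod n) := hinj hst
    have h2 : (s : ZMod n) = (t : ZMod n) := by
      have := congrArg (fun x => -i + x) h1
      simpa [add_comm, ← add_assoc] using this
    have h3 : s % n = t % n := (ZMod.natCast_eq_natCast_iff' s t n).mp h2
    rcases Nat.lt_or_ge s n with hsn' | hsn'
    · rw [Nat.mod_eq_of_lt hsn'] at h3
      rcases Nat.lt_or_ge t n with htn' | htn'
      · rw [Nat.mod_eq_of_lt htn'] at h3; exact h3
      · have ht' : t = n := by omega
        rw [ht', Nat.mod_self] at h3; omega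
    · have hs' : s = n := by omega
      rw [hs', Nat.mod_self] at h3
      rcases Nat.lt_or_ge t n with htn' | htn'
      · rw [Nat.mod_eq_of_lt htn'] at h3; omega
      · omega
  have hcrange : ∀ t : ℕ, c t ∈ Set.range f := fun t => ⟨i + (t : ZMod n), rfl⟩
  -- Useful identifications
  have hca : c a = f k := by rw [hc, hk]
  have hc1 : c 1 = f (i + 1) := by simp [hc]
  have hcb : c b = f j := by rw [hc, hj]
  have hcb1 : c (b + 1) = f (j + 1) := by rw [hc, hj]; push_cast; ring_nf
  have hca1 : c (a - 1) = f (k - 1) := by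
    show f (i + ((a - 1 : ℕ) : ZMod n)) = f (k - 1)
    rw [hk]
    congr 1
    have h5' : a - 1 + 1 = a := by omega
    have h6' := congrArg (fun x : ℕ => (x : ZMod n)) h5'
    push_cast at h6'
    have h7' : ((a - 1 : ℕ) : ZMod n) = (a : ZMod n) - 1 := by linear_combination h6'
    rw [h7']; ring
  have hcn : c n = f i := by simp [hc]
  -- adjacency along the cycle in ℕ-indices
  have hadjc : ∀ t : ℕ, G.Adj (c t) (c (t + 1)) := by
    intro t
    have := hadjC (i + (t : ZMod n))
    have h6 : i + (t : ZMod n) + 1 = i + ((t + 1 : ℕ) : ZMod n) := by push_cast; ring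
    rw [h6] at this
    exact this
  -- The three index segments
  set L1 : List ℕ := (List.range' a (b - a + 1)).reverse with hL1
  set L2 : List ℕ := List.range' 1 (a - 1) with hL2
  set L3 : List ℕ := List.range' (b + 1) (n - b) with hL3
  set idxs : List ℕ := L1 ++ (L2 ++ L3) with hidxs
  set l : List V := p ++ idxs.map c with hl
  -- membership bounds
  have hmemL1 : ∀ x ∈ L1, a ≤ x ∧ x ≤ b := by
    intro x hx
    rw [hL1, List.mem_reverse, List.mem_range'_1] at hx
    omega
  have hmemL2 : ∀ x ∈ L2, 1 ≤ x ∧ x < a := by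
    intro x hx
    rw [hL2, List.mem_range'_1] at hx
    omega
  have hmemL3 : ∀ x ∈ L3, b + 1 ≤ x ∧ x ≤ n := by
    intro x hx
    rw [hL3, List.mem_range'_1] at hx
    omega
  have hmem : ∀ x ∈ idxs, 1 ≤ x ∧ x ≤ n := by
    intro x hx
    rw [hidxs, List.mem_append, List.mem_append] at hx
    rcases hx with hx | hx | hx
    · have := hmemL1 x hx; omega
    · have := hmemL2 x hx; omega
    · have := hmemL3 x hx; omega
  have hidxnodup : idxs.Nodup := by
    rw [hidxs]
    refine List.Nodup.append ?_ (List.Nodup.append ?_ ?_ ?_) ?_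
    · rw [hL1]; exact List.nodup_reverse.mpr (List.nodup_range' 1 (by omega))
    · rw [hL2]; exact List.nodup_range' 1 (by omega)
    · rw [hL3]; exact List.nodup_range' 1 (by omega)
    · rw [List.disjoint_left]
      intro x hx hx'
      have := hmemL2 x hx
      have := hmemL3 x hx'
      omega
    · rw [List.disjoint_left]
      intro x hx hx'
      have h7 := hmemL1 x hx
      rw [List.mem_append] at hx'
      rcases hx' with hx' | hx'
      · have := hmemL2 x hx'; omega
      · have := hmemL3 x hx'; omega
  have hmapnodup : (idxs.map c).Nodup := by
    refine List.Nodup.map_on ?_ hidxnodup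
    intro x hx y hy hxy
    have h8 := hmem x hx
    have h9 := hmem y hy
    exact hcinj x y h8.1 h8.2 h9.1 h9.2 hxy
  have hlnodup : l.Nodup := by
    rw [hl]
    refine List.Nodup.append hpnodup hmapnodup ?_
    rw [List.disjoint_left]
    intro x hx hx'
    obtain ⟨t, _, rfl⟩ := List.mem_map.mp hx'
    exact (hpS _ hx) (hcrange t)
  -- lengths
  have hL1len : L1.length = b - a + 1 := by rw [hL1]; simp
  have hL2len : L2.length = a - 1 := by rw [hL2]; simp
  have hL3len : L3.length = n - b := by rw [hL3]; simp
  have hplen : 1 ≤ p.length := by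
    rcases p with _ | ⟨x, xs⟩
    · exact absurd rfl hpne
    · simp
  have hllen : l.length = p.length + n := by
    rw [hl]
    simp only [List.length_append, List.length_map, hidxs, List.length_append,
      hL1len, hL2len, hL3len]
    omega
  -- heads and lasts of segments
  have hL1cons : L1 = b :: (List.range' a (b - a)).reverse := by
    rw [hL1, List.range'_concat]
    rw [List.reverse_append]
    simp
    omega
  have hL2cons : L2 = 1 :: List.range' 2 (a - 2) := by
    rw [hL2]
    have h10 : a - 1 = (a - 2) + 1 := by omega
    rw [h10, List.range'_succ]
  have hL3cons : L3 = (b + 1) :: List.range' (b + 2) (n - b - 1) := by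
    have h11 : L3 = List.range' (b + 1) ((n - b - 1) + 1) := by
      rw [hL3]; congr 1; omega
    have h12 : b + 1 + 1 = b + 2 := by omega
    rw [h11, List.range'_succ, h12]
  have hL1last : L1.getLast? = some a := by
    rw [hL1]
    rw [List.getLast?_reverse]
    have h12 : b - a + 1 = (b - a) + 1 := rfl
    rw [h12, List.range'_succ]
    rfl
  have hL2last : L2.getLast? = some (a - 1) := by
    rw [hL2]
    have h13 : a - 1 = (a - 2) + 1 := by omega
    rw [h13, List.range'_concat, List.getLast?_concat]
    congr 1
    omega
  have hL3last : L3.getLast? = some n := by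
    rw [hL3]
    have h14 : n - b = (n - b - 1) + 1 := by omega
    rw [h14, List.range'_concat, List.getLast?_concat]
    congr 1
    omega
  -- the chain
  have hchain1 : List.Chain' G.Adj (L1.map c) := by
    rw [hL1, List.map_reverse, List.Chain', List.isChain_reverse]
    exact chain'_range'_map c a (b - a + 1) (fun t _ _ => (hadjc t).symm)
  have hchain2 : List.Chain' G.Adj (L2.map c) := by
    rw [hL2]
    apply chain'_range'_map
    intro t _ _
    exact hadjc t
  have hchain3 : List.Chain' G.Adj (L3.map c) := by
    rw [hL3]
    apply chain'_range'_map
    intro t _ _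
    exact hadjc t
  have hchain23 : List.Chain' G.Adj ((L2 ++ L3).map c) := by
    rw [List.map_append, List.Chain', List.isChain_append]
    refine ⟨hchain2, hchain3, ?_⟩
    intro x hx y hy
    rw [List.getLast?_map, hL2last] at hx
    rw [hL3cons] at hy
    simp at hx hy
    subst hx; subst hy
    rw [hca1, hcb1]
    exact hadj.symm
  have hchainidx : List.Chain' G.Adj (idxs.map c) := by
    rw [hidxs, List.map_append, List.Chain', List.isChain_append]
    refine ⟨hchain1, hchain23, ?_⟩
    intro x hx y hy
    rw [List.getLast?_map, hL1last] at hx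
    rw [List.map_append] at hy
    have hy2 : y ∈ ((L2.map c) ++ (L3.map c)).head? := hy
    rw [hL2cons] at hy2
    simp at hx hy2
    subst hx; subst hy2
    rw [hca, hc1]
    exact hw1.symm
  have hchainl : List.Chain' G.Adj l := by
    rw [hl, List.Chain', List.isChain_append]
    refine ⟨pw.isChain_adj_support, hchainidx, ?_⟩
    intro x hx y hy
    rw [List.getLast?_eq_getLast hpne, hplast] at hx
    rw [hidxs, List.map_append, hL1cons] at hy
    simp at hx hy
    subst hx; subst hy
    rw [hcb]
    exact hzadj.symm
  -- head and last of l
  have hlne : l ≠ [] := by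
    rw [hl]
    simp [hpne]
  have hlhead : l.head hlne = (hwv : V) := by
    have h0 : l.head? = some (hwv : V) := by
      rw [hl, hp, SimpleGraph.Walk.support_eq_cons pw]; rfl
    rw [List.head?_eq_head hlne] at h0
    exact Option.some.inj h0
  have hllast : l.getLast hlne = c n := by
    have h15 : l.getLast? = some (c n) := by
      rw [hl, List.getLast?_append]
      have h16 : (idxs.map c).getLast? = some (c n) := by
        rw [List.getLast?_map, hidxs, List.getLast?_append, List.getLast?_append,
          hL3last]
        rfl
      rw [h16]
      rfl
    rw [List.getLast?_eq_getLast hlne] at h15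
    exact Option.some.inj h15
  have hwrap : G.Adj (l.getLast hlne) (l.head hlne) := by
    rw [hllast, hlhead, hcn]
    exact hwadj
  have h3l : 3 ≤ l.length := by omega
  obtain ⟨g, hg⟩ := cycleOfList G l h3l hlnodup hchainl hlne hwrap
  have := hmax l.length g hg
  omega
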